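/- Suppose the statistic s is a balancing score in the sense P(X = x | T = t, s(X) = σ) = P(X = x | s(X) = σ) for all t, x, σ with positive-probability conditioning events. Then X and T are conditionally independent given s(X). -/

import Mathlib

open MeasureTheory

/-- If s is a balancing score, i.e.
P(X = x | T = t, s(X) = σ) = P(X = x | s(X) = σ), then X ⫫ T | s(X). -/
theorem balancing_implies_cond_indep
    {Ω 𝒳 𝒯 𝒮 : Type*} [MeasurableSpace Ω] [Countable 𝒳] [Countable 𝒯]
    (P : Measure Ω) [IsProbabilityMeasure P]
    (X : Ω → 𝒳) (T : Ω → 𝒯) (s : 𝒳 → 𝒮)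
    (hbal : ∀ (x : 𝒳) (t : 𝒯) (σ : 𝒮),
      0 < P {ω | T ω = t ∧ s (X ω) = σ} → 0 < P {ω | s (X ω) = σ} →
      P {ω | X ω = x ∧ T ω = t ∧ s (X ω) = σ} / P {ω | T ω = t ∧ s (X ω) = σ} =
      P {ω | X ω = x ∧ s (X ω) = σ} / P {ω | s (X ω) = σ}) :
    ∀ (x : 𝒳) (t : 𝒯) (σ : 𝒮), 0 < P {ω | s (X ω) = σ} →
      P {ω | X ω = x ∧ T ω = t ∧ s (X ω) = σ} * P {ω | s (X ω) = σ} =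
      P {ω | X ω = x ∧ s (X ω) = σ} * P {ω | T ω = t ∧ s (X ω) = σ} := by
  intro x t σ hσ
  set a := P {ω | X ω = x ∧ T ω = t ∧ s (X ω) = σ} with ha
  set b := P {ω | T ω = t ∧ s (X ω) = σ} with hb
  set c := P {ω | X ω = x ∧ s (X ω) = σ} with hc
  set d := P {ω | s (X ω) = σ} with hd
  rcases eq_or_lt_of_le (zero_le : (0:ENNReal) ≤ b) with hb0 | hb0
  · have hab : a ≤ b := measure_mono (fun ω hω => hω.2)
    have ha0 : a = 0 := le_antisymm (hb0 ▸ hab) zero_le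
    simp [ha0, ← hb0]
  · have key := hbal x t σ hb0 hσ
    have hbne : b ≠ 0 := hb0.ne'
    have hdne : d ≠ 0 := hσ.ne'
    have hbtop : b ≠ ⊤ := measure_ne_top P _
    have hdtop : d ≠ ⊤ := measure_ne_top P _
    have := congrArg (· * (b * d)) key
    calc a * d = a / b * (b * d) := by
          rw [← mul_assoc, ENNReal.div_mul_cancel hbne hbtop]
      _ = c / d * (b * d) := by rw [key]
      _ = c * b := by
          rw [mul_comm b d, ← mul_assoc, ENNReal.div_mul_cancel hdne hdtop]
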